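/- (Equivalence of the SLP and DR linear programming subproblems under positive pool flows.) Let y^t be a flow vector with all components nonnegative such that ∑_{j∈J} yLJ^t_{ℓj} > 0 for every ℓ ∈ L, and let α^t : L × K → ℝ be arbitrary. For ℓ ∈ L, j ∈ J, k ∈ K define σ_{ℓjk}(y) = α^t_{ℓk} · yLJ_{ℓj} + (yLJ^t_{ℓj} / ∑_{r∈J} yLJ^t_{ℓr}) · (∑_{i∈I} λ_{ik} yIL_{iℓ} − α^t_{ℓk} · ∑_{r∈J} yLJ_{ℓr}). Then a flow vector y satisfies, for all j ∈ J and k ∈ K, λmin_{jk} · (∑_{i∈I} yIJ_{ij} + ∑_{ℓ∈L} yLJ_{ℓj}) ≤ ∑_{i∈I} λ_{ik} yIJ_{ij} + ∑_{ℓ∈L} σ_{ℓjk}(y) ≤ λmax_{jk} · (∑_{i∈I} yIJ_{ij} + ∑_{ℓ∈L} yLJ_{ℓj}) if and only if there exists α : L × K → ℝ such that ∑_{i∈I} λ_{ik} yIL_{iℓ} = α^t_{ℓk} · ∑_{j∈J} yLJ_{ℓj} + (α_{ℓk} − α^t_{ℓk}) · ∑_{j∈J} yLJ^t_{ℓj}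 for all ℓ ∈ L, k ∈ K, and for all j ∈ J, k ∈ K, λmin_{jk} · (∑_{i∈I} yIJ_{ij} + ∑_{ℓ∈L} yLJ_{ℓj}) ≤ ∑_{i∈I} λ_{ik} yIJ_{ij} + ∑_{ℓ∈L} (α^t_{ℓk} · yLJ_{ℓj} + yLJ^t_{ℓj} · (α_{ℓk} − α^t_{ℓk})) ≤ λmax_{jk} · (∑_{i∈I} yIJ_{ij} + ∑_{ℓ∈L} yLJ_{ℓj}). -/

import Mathlib

open scoped BigOperators

/-- A flow vector on the complete tripartite pooling network. -/
abbrev FlowVec (I L J : Type*) : Type _ :=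
  (I → L → ℝ) × (I → J → ℝ) × (L → J → ℝ)

/-- The pool quality `q_{ℓk}(y)`. -/
noncomputable def poolQuality {I L J K : Type*} [Fintype I] [Fintype J]
    (lam : I → K → ℝ) (ℓ : L) (k : K) (y : FlowVec I L J) : ℝ :=
  if 0 < ∑ j, y.2.2 ℓ j then (∑ i, lam i k * y.1 i ℓ) / (∑ j, y.2.2 ℓ j) else 0

/-- equivalence of the SLP and DR LP subproblems under positive pool
flows: the projected DR output-quality constraints hold at `y` iff there exist
quality values `α` satisfying the linearized pool material balances (15) together
with the linearized output-quality constraints. -/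
theorem slp_dr_subproblems_equivalent
    {I L J K : Type*} [Fintype I] [Fintype L] [Fintype J]
    [Nonempty I] [Nonempty L] [Nonempty J] [Nonempty K]
    (lam : I → K → ℝ) (lamin lamax : J → K → ℝ)
    (yt : FlowVec I L J)
    (hyt1 : ∀ i ℓ, 0 ≤ yt.1 i ℓ) (hyt2 : ∀ i j, 0 ≤ yt.2.1 i j)
    (hyt3 : ∀ ℓ j, 0 ≤ yt.2.2 ℓ j)
    (hpos : ∀ ℓ, 0 < ∑ j, yt.2.2 ℓ j)
    (αt : L → K → ℝ)
    (y : FlowVec I L J) :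
    (∀ (j : J) (k : K),
      lamin j k * ((∑ i, y.2.1 i j) + ∑ ℓ, y.2.2 ℓ j)
        ≤ (∑ i, lam i k * y.2.1 i j)
          + ∑ ℓ, (αt ℓ k * y.2.2 ℓ j + (yt.2.2 ℓ j / ∑ r, yt.2.2 ℓ r)
              * ((∑ i, lam i k * y.1 i ℓ) - αt ℓ k * ∑ r, y.2.2 ℓ r)) ∧
      (∑ i, lam i k * y.2.1 i j)
          + (∑ ℓ, (αt ℓ k * y.2.2 ℓ j + (yt.2.2 ℓ j / ∑ r, yt.2.2 ℓ r)
              * ((∑ i, lam i k * y.1 i ℓ) - αt ℓ k * ∑ r, y.2.2 ℓ r)))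
        ≤ lamax j k * ((∑ i, y.2.1 i j) + ∑ ℓ, y.2.2 ℓ j)) ↔
    (∃ α : L → K → ℝ,
      (∀ (ℓ : L) (k : K),
        ∑ i, lam i k * y.1 i ℓ
          = αt ℓ k * (∑ j, y.2.2 ℓ j) + (α ℓ k - αt ℓ k) * ∑ j, yt.2.2 ℓ j) ∧
      ∀ (j : J) (k : K),
        lamin j k * ((∑ i, y.2.1 i j) + ∑ ℓ, y.2.2 ℓ j)
          ≤ (∑ i, lam i k * y.2.1 i j)
            + ∑ ℓ, (αt ℓ k * y.2.2 ℓ j + yt.2.2 ℓ j * (α ℓ k - αt ℓ k)) ∧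
        (∑ i, lam i k * y.2.1 i j)
            + (∑ ℓ, (αt ℓ k * y.2.2 ℓ j + yt.2.2 ℓ j * (α ℓ k - αt ℓ k)))
          ≤ lamax j k * ((∑ i, y.2.1 i j) + ∑ ℓ, y.2.2 ℓ j)) := by
  constructor
  · intro h
    refine ⟨fun ℓ k => αt ℓ k +
      ((∑ i, lam i k * y.1 i ℓ) - αt ℓ k * ∑ j, y.2.2 ℓ j) / (∑ j, yt.2.2 ℓ j), ?_, ?_⟩
    · intro ℓ k
      have hne : (∑ j, yt.2.2 ℓ j) ≠ 0 := (hpos ℓ).ne'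
      field_simp
      ring
    · intro j k
      have hsum : ∀ k j, (∑ ℓ, (αt ℓ k * y.2.2 ℓ j + yt.2.2 ℓ j *
          ((αt ℓ k + ((∑ i, lam i k * y.1 i ℓ) - αt ℓ k * ∑ r, y.2.2 ℓ r) /
            (∑ r, yt.2.2 ℓ r)) - αt ℓ k)))
          = ∑ ℓ, (αt ℓ k * y.2.2 ℓ j + (yt.2.2 ℓ j / ∑ r, yt.2.2 ℓ r)
              * ((∑ i, lam i k * y.1 i ℓ) - αt ℓ k * ∑ r, y.2.2 ℓ r)) := by
        intro k j
        refine Finset.sum_congr rfl fun ℓ _ => ?_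
        have hne : (∑ r, yt.2.2 ℓ r) ≠ 0 := (hpos ℓ).ne'
        field_simp
        ring
      rw [hsum]
      exact h j k
  · rintro ⟨α, hbal, h⟩
    intro j k
    have hsum : (∑ ℓ, (αt ℓ k * y.2.2 ℓ j + (yt.2.2 ℓ j / ∑ r, yt.2.2 ℓ r)
          * ((∑ i, lam i k * y.1 i ℓ) - αt ℓ k * ∑ r, y.2.2 ℓ r)))
        = ∑ ℓ, (αt ℓ k * y.2.2 ℓ j + yt.2.2 ℓ j * (α ℓ k - αt ℓ k)) := by
      refine Finset.sum_congr rfl fun ℓ _ => ?_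
      have hne : (∑ r, yt.2.2 ℓ r) ≠ 0 := (hpos ℓ).ne'
      have hE : (∑ i, lam i k * y.1 i ℓ) - αt ℓ k * ∑ r, y.2.2 ℓ r
          = (α ℓ k - αt ℓ k) * ∑ r, yt.2.2 ℓ r := by
        have := hbal ℓ k; linarith
      rw [hE]
      field_simp
    rw [hsum]
    exact h j k
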